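/- Let v ≡ 1 (mod k(k-1)) and let S be a system of representatives of the block orbits of a cyclic S(2,k,v). Then every nonzero element of Z_v occurs exactly once as a difference b - b' of two distinct points of some block in S. -/

import Mathlib

section Stmt9Aux

variable {v : ℕ} [NeZero v]

private lemma stmt9_image_add_mem {B : Finset (Finset (ZMod v))}
    (hcyc : ∀ b ∈ B, b.image (· + 1) ∈ B) {b : Finset (ZMod v)} (hb : b ∈ B)
    (t : ZMod v) : b.image (· + t) ∈ B := by
  have h : ∀ n : ℕ, b.image (· + (n : ZMod v)) ∈ B := by
    intro n
    induction n with
    | zero => simpa using hb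
    | succ n ih =>
        have h2 := hcyc _ ih
        rw [Finset.image_image] at h2
        have he : ((· + (1 : ZMod v)) ∘ (· + (n : ZMod v)))
            = fun x : ZMod v => x + ((n + 1 : ℕ) : ZMod v) := by
          funext x; simp only [Function.comp]; push_cast; ring
        rwa [he] at h2
  have h2 := h t.val
  rwa [ZMod.natCast_val, ZMod.cast_id] at h2

/-- Triviality of the translation stabilizer of a `k`-subset when `v ≡ 1 [MOD k(k-1)]`. -/
private lemma stmt9_stab_trivial {k : ℕ} (hv : v % (k * (k - 1)) = 1)
    {s : Finset (ZMod v)} (hcard : s.card = k) {e : ZMod v}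
    (he : s.image (· + e) = s) : e = 0 := by
  classical
  set H : AddSubgroup (ZMod v) :=
    { carrier := {t | s.image (· + t) = s}
      zero_mem' := by
        show s.image (· + (0:ZMod v)) = s
        ext x; simp
      add_mem' := by
        intro a b ha hb
        simp only [Set.mem_setOf_eq] at *
        have h1 : s.image (· + (a + b)) = (s.image (· + a)).image (· + b) := by
          rw [Finset.image_image]
          congr 1; funext x; simp [add_assoc]
        rw [h1, ha, hb]
      neg_mem' := by
        intro a ha
        simp only [Set.mem_setOf_eq] at *
        have h1 : (s.image (· + a)).image (· + (-a)) = s := by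
          rw [Finset.image_image]
          have h2 : ((· + (-a)) ∘ (· + a)) = (id : ZMod v → ZMod v) := by
            funext x; simp
          rw [h2, Finset.image_id]
        rw [ha] at h1
        exact h1 } with hHdef
  have heH : e ∈ H := he
  have hsinv : ∀ t ∈ H, ∀ x ∈ s, x + t ∈ s := by
    intro t ht x hx
    have : x + t ∈ s.image (· + t) := Finset.mem_image_of_mem _ hx
    rwa [ht] at this
  -- Nat.card H divides v
  have hm_v : Nat.card H ∣ v := by
    have h4 := AddSubgroup.card_addSubgroup_dvd_card H
    rwa [Nat.card_zmod] at h4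
  -- Nat.card H divides k
  have hm_k : Nat.card H ∣ k := by
    have key : ∀ x ∈ s,
        (s.filter fun y => (QuotientAddGroup.mk y : ZMod v ⧸ H) = QuotientAddGroup.mk x)
          = Finset.image (fun h : H => x + (h : ZMod v)) Finset.univ := by
      intro x hx
      ext y
      simp only [Finset.mem_filter, Finset.mem_image, Finset.mem_univ, true_and]
      constructor
      · rintro ⟨hy, hq⟩
        have h5 : -y + x ∈ H := QuotientAddGroup.eq.mp hq
        have h6 : y - x ∈ H := by
          have := H.neg_mem h5
          simpa [neg_add_rev, sub_eq_add_neg, add_comm] using this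
        exact ⟨⟨y - x, h6⟩, by simp⟩
      · rintro ⟨⟨h, hh⟩, rfl⟩
        refine ⟨hsinv _ hh _ hx, ?_⟩
        exact QuotientAddGroup.eq.mpr (by simpa using hh)
    have hfc : ∀ x ∈ s,
        ((s.filter fun y =>
            (QuotientAddGroup.mk y : ZMod v ⧸ H) = QuotientAddGroup.mk x)).card
          = Nat.card H := by
      intro x hx
      rw [key x hx, Finset.card_image_of_injective _
        (fun a b hab => Subtype.ext (add_left_cancel hab))]
      simp [Nat.card_eq_fintype_card]
    have hsum := Finset.card_eq_sum_card_image
      (fun y => (QuotientAddGroup.mk y : ZMod v ⧸ H)) s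
    rw [hcard] at hsum
    have hsum2 : ∑ q ∈ s.image (fun y => (QuotientAddGroup.mk y : ZMod v ⧸ H)),
        (s.filter fun y => (QuotientAddGroup.mk y : ZMod v ⧸ H) = q).card
          = ∑ _q ∈ s.image (fun y => (QuotientAddGroup.mk y : ZMod v ⧸ H)), Nat.card H := by
      apply Finset.sum_congr rfl
      intro q hq
      obtain ⟨x, hx, rfl⟩ := Finset.mem_image.mp hq
      exact hfc x hx
    rw [hsum2, Finset.sum_const, smul_eq_mul] at hsum
    exact ⟨_, hsum.trans (Nat.mul_comm _ _)⟩
  -- hence Nat.card H = 1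
  have hmul : Nat.card H ∣ k * (k - 1) := hm_k.mul_right _
  have hveq : v = k * (k - 1) * (v / (k * (k - 1))) + 1 := by
    conv_lhs => rw [← Nat.div_add_mod v (k * (k - 1))]
    rw [hv]
  have hone : Nat.card H ∣ 1 := by
    have h7 : Nat.card H ∣ k * (k - 1) * (v / (k * (k - 1))) := hmul.mul_right _
    have h8 : 1 = v - k * (k - 1) * (v / (k * (k - 1))) := by omega
    rw [h8]
    exact Nat.dvd_sub hm_v h7
  have hcard1 : Nat.card H = 1 := Nat.dvd_one.mp hone
  have hsub : Subsingleton H := (Nat.card_eq_one_iff_unique.mp hcard1).1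
  have : (⟨e, heH⟩ : H) = ⟨0, H.zero_mem⟩ := Subsingleton.elim _ _
  exact congrArg Subtype.val this

end Stmt9Aux

/-- If `v ≡ 1 (mod k(k-1))` and `S` is a system of representatives of the block orbits
of a cyclic `S(2,k,v)`, then every nonzero difference occurs exactly once among
ordered pairs of distinct points of blocks of `S`. -/
theorem stmt_9 (v k : ℕ) [NeZero v] (hk : 2 ≤ k) (hv : v % (k * (k - 1)) = 1)
    (B : Finset (Finset (ZMod v)))
    (hblocks : ∀ b ∈ B, b.card = k)
    (hpair : ∀ p q : ZMod v, p ≠ q → ∃! b, b ∈ B ∧ p ∈ b ∧ q ∈ b)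
    (hcyc : ∀ b ∈ B, b.image (· + 1) ∈ B)
    (S : Finset (Finset (ZMod v))) (hS : S ⊆ B)
    (hrep : ∀ b ∈ B, ∃! s, s ∈ S ∧ ∃ t : ZMod v, b = s.image (· + t)) :
    ∀ d : ZMod v, d ≠ 0 →
      (∑ s ∈ S, ((s ×ˢ s).filter fun p => p.1 ≠ p.2 ∧ p.1 - p.2 = d).card) = 1 := by
  classical
  intro d hd
  -- difference count in filter form
  set c : Finset (ZMod v) → ℕ := fun b => (b.filter fun q => q + d ∈ b).card with hc
  -- the product-form count equals c
  have hceq : ∀ b : Finset (ZMod v),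
      ((b ×ˢ b).filter fun p => p.1 ≠ p.2 ∧ p.1 - p.2 = d).card = c b := by
    intro b
    apply Finset.card_nbij' (fun p => p.2) (fun q => (q + d, q))
    · intro p hp
      simp only [Finset.mem_coe, Finset.mem_filter, Finset.mem_product] at hp
      obtain ⟨⟨h1, h2⟩, _, h4⟩ := hp
      have : p.1 = p.2 + d := by
        have := sub_eq_iff_eq_add.mp h4
        linear_combination this
      simp only [Finset.mem_coe, Finset.mem_filter]
      exact ⟨h2, this ▸ h1⟩
    · intro q hq
      simp only [Finset.mem_coe, Finset.mem_filter] at hq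
      refine Finset.mem_filter.mpr ⟨Finset.mem_product.mpr ⟨hq.2, hq.1⟩, ?_, by ring⟩
      intro h
      exact hd (by linear_combination h)
    · intro p hp
      simp only [Finset.mem_coe, Finset.mem_filter, Finset.mem_product] at hp
      obtain ⟨⟨h1, h2⟩, _, h4⟩ := hp
      have h5 : p.1 = p.2 + d := by linear_combination sub_eq_iff_eq_add.mp h4
      exact Prod.ext h5.symm rfl
    · intro q hq
      rfl
  -- translation invariance of c
  have hcinv : ∀ (b : Finset (ZMod v)) (t : ZMod v), c (b.image (· + t)) = c b := by
    intro b t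
    simp only [hc]
    rw [Finset.filter_image, Finset.card_image_of_injective _ (add_left_injective t)]
    congr 1
    apply Finset.filter_congr
    intro x hx
    constructor
    · intro h
      obtain ⟨y, hy, hxy⟩ := Finset.mem_image.mp h
      have : y = x + d := by
        have : y + t = (x + d) + t := by linear_combination hxy
        exact add_right_cancel this
      rwa [this] at hy
    · intro h
      refine Finset.mem_image.mpr ⟨x + d, h, by ring⟩
  -- total count over all blocks is v
  have htot : ∑ b ∈ B, c b = v := by
    have hfilt : ∀ b : Finset (ZMod v), c b
        = ∑ q : ZMod v, if q ∈ b ∧ q + d ∈ b then 1 else 0 := by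
      intro b
      simp only [hc]
      rw [Finset.card_filter]
      rw [← Finset.sum_filter_add_sum_filter_not Finset.univ (· ∈ b)]
      have h1 : Finset.univ.filter (· ∈ b) = b := by ext x; simp
      rw [h1]
      have h2 : ∀ q ∈ b, (if q + d ∈ b then 1 else 0)
          = (if q ∈ b ∧ q + d ∈ b then (1:ℕ) else 0) := by
        intro q hq; simp [hq]
      rw [Finset.sum_congr rfl h2]
      have h3 : ∀ q ∈ Finset.univ.filter (¬ · ∈ b),
          (if q ∈ b ∧ q + d ∈ b then (1:ℕ) else 0) = 0 := by
        intro q hq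
        simp only [Finset.mem_filter] at hq
        simp [hq.2]
      rw [Finset.sum_congr rfl h3]
      simp
    calc ∑ b ∈ B, c b
        = ∑ b ∈ B, ∑ q : ZMod v, if q ∈ b ∧ q + d ∈ b then 1 else 0 :=
          Finset.sum_congr rfl fun b _ => hfilt b
      _ = ∑ q : ZMod v, ∑ b ∈ B, if q ∈ b ∧ q + d ∈ b then 1 else 0 :=
          Finset.sum_comm
      _ = ∑ q : ZMod v, (B.filter fun b => q ∈ b ∧ q + d ∈ b).card :=
          Finset.sum_congr rfl fun q _ => (Finset.card_filter _ _).symm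
      _ = ∑ _q : ZMod v, 1 := by
          apply Finset.sum_congr rfl
          intro q _
          have hne : q + d ≠ q := by
            intro h
            exact hd (by linear_combination h)
          obtain ⟨b0, ⟨hb0B, hb0p, hb0q⟩, huniq⟩ := hpair (q + d) q hne
          rw [Finset.card_eq_one]
          refine ⟨b0, ?_⟩
          ext b
          simp only [Finset.mem_filter, Finset.mem_singleton]
          constructor
          · rintro ⟨hbB, hq, hqd⟩
            exact huniq b ⟨hbB, hqd, hq⟩
          · rintro rfl
            exact ⟨hb0B, hb0q, hb0p⟩
      _ = v := by simp [ZMod.card]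
  -- total count equals v * (sum over representatives)
  have horb : ∑ b ∈ B, c b = v * ∑ s ∈ S, c s := by
    have hbij : ∑ p ∈ S ×ˢ (Finset.univ : Finset (ZMod v)), c p.1 = ∑ b ∈ B, c b := by
      apply Finset.sum_bij (fun p _ => p.1.image (· + p.2))
      · rintro ⟨s, t⟩ hp
        simp only [Finset.mem_product] at hp
        exact stmt9_image_add_mem hcyc (hS hp.1) t
      · rintro ⟨s₁, t₁⟩ hp₁ ⟨s₂, t₂⟩ hp₂ heq
        simp only [Finset.mem_product] at hp₁ hp₂
        dsimp only at heq
        have hbB : s₁.image (· + t₁) ∈ B := stmt9_image_add_mem hcyc (hS hp₁.1) t₁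
        obtain ⟨s₀, _, huniq⟩ := hrep _ hbB
        have hs₁ : s₁ = s₀ := huniq s₁ ⟨hp₁.1, t₁, rfl⟩
        have hs₂ : s₂ = s₀ := huniq s₂ ⟨hp₂.1, t₂, heq⟩
        have hss : s₁ = s₂ := hs₁.trans hs₂.symm
        subst hss
        -- now s₁.image (·+t₁) = s₁.image (·+t₂)
        have hkey : s₁.image (· + (t₁ - t₂)) = s₁ := by
          have h1 : (s₁.image (· + t₁)).image (· + (-t₂))
              = (s₁.image (· + t₂)).image (· + (-t₂)) := by rw [heq]
          rw [Finset.image_image, Finset.image_image] at h1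
          have h2 : ((· + (-t₂)) ∘ (· + t₁)) = fun x : ZMod v => x + (t₁ - t₂) := by
            funext x; simp only [Function.comp]; ring
          have h3 : ((· + (-t₂)) ∘ (· + t₂)) = (id : ZMod v → ZMod v) := by
            funext x; simp
          rw [h2, h3, Finset.image_id] at h1
          exact h1
        have ht : t₁ - t₂ = 0 :=
          stmt9_stab_trivial hv (hblocks s₁ (hS hp₁.1)) hkey
        have : t₁ = t₂ := by linear_combination ht
        rw [this]
      · intro b hb
        obtain ⟨s₀, ⟨hs₀S, t₀, hbt⟩, _⟩ := hrep b hb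
        exact ⟨(s₀, t₀), Finset.mem_product.mpr ⟨hs₀S, Finset.mem_univ _⟩, hbt.symm⟩
      · rintro ⟨s, t⟩ hp
        exact (hcinv s t).symm
    rw [← hbij, Finset.sum_product, Finset.mul_sum]
    exact Finset.sum_congr rfl fun s _ => by
      simp [Finset.sum_const, Finset.card_univ, ZMod.card, mul_comm]
  -- conclude
  have hv1 : v * ∑ s ∈ S, c s = v * 1 := by
    rw [mul_one, ← horb, htot]
  have hfin : ∑ s ∈ S, c s = 1 :=
    Nat.eq_of_mul_eq_mul_left (Nat.pos_of_ne_zero (NeZero.ne v)) hv1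
  calc ∑ s ∈ S, ((s ×ˢ s).filter fun p => p.1 ≠ p.2 ∧ p.1 - p.2 = d).card
      = ∑ s ∈ S, c s := Finset.sum_congr rfl fun s _ => hceq s
    _ = 1 := hfin
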